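/- The function F̃(α, β) := (Γ(α)Γ(β)/Γ(α+β))² · ₃F₂(α, β, α+β−1; α+β, α+β; 1) is strictly monotonically decreasing in α on (0, ∞) for each fixed β > 0 with α + β > 1; in particular F̃(1/4, 1/2) − F̃(3/4, 1/2) > 0. -/

import Mathlib

open MeasureTheory Set Filter

/-- Pochhammer symbol (a)ₘ = a(a+1)⋯(a+m−1). -/
noncomputable def poch (a : ℝ) (m : ℕ) : ℝ := ∏ i ∈ Finset.range m, (a + i)

/-- Generalized hypergeometric series ₃F₂(a,b,c; e,f; z). -/
noncomputable def F32 (a b c e f z : ℝ) : ℝ :=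
  ∑' n : ℕ, poch a n * poch b n * poch c n / (poch e n * poch f n * n.factorial) * z ^ n

/-- F̃(α,β) = (Γ(α)Γ(β)/Γ(α+β))² · ₃F₂(α, β, α+β−1; α+β, α+β; 1). -/
noncomputable def Ftilde (α β : ℝ) : ℝ :=
  (Real.Gamma α * Real.Gamma β / Real.Gamma (α + β)) ^ 2 *
    F32 α β (α + β - 1) (α + β) (α + β) 1

lemma poch_zero (a : ℝ) : poch a 0 = 1 := by simp [poch]

lemma poch_succ (a : ℝ) (n : ℕ) : poch a (n+1) = poch a n * (a + n) := by
  simp [poch, Finset.prod_range_succ]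

lemma poch_succ' (a : ℝ) (n : ℕ) : poch a (n+1) = a * poch (a+1) n := by
  rw [poch, Finset.prod_range_succ']
  simp only [Nat.cast_zero, add_zero]
  rw [mul_comm]; congr 1
  refine Finset.prod_congr rfl fun i _ => ?_
  push_cast; ring

lemma poch_pos {a : ℝ} (ha : 0 < a) (n : ℕ) : 0 < poch a n :=
  Finset.prod_pos fun i _ => by positivity

lemma poch_nonneg {a : ℝ} (ha : 0 ≤ a) (n : ℕ) : 0 ≤ poch a n :=
  Finset.prod_nonneg fun i _ => by positivity

lemma Gamma_poch {a : ℝ} (ha : ∀ k : ℕ, a + k ≠ 0) (n : ℕ) :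
    Real.Gamma (a + n) = Real.Gamma a * poch a n := by
  induction n with
  | zero => simp [poch_zero]
  | succ n ih =>
    have h : a + ((n+1 : ℕ) : ℝ) = (a + n) + 1 := by push_cast; ring
    rw [h, Real.Gamma_add_one (ha n), ih, poch_succ]; ring

/-- The real Beta function value. -/
noncomputable def betaR (a b : ℝ) : ℝ := Real.Gamma a * Real.Gamma b / Real.Gamma (a + b)

lemma betaR_pos {a b : ℝ} (ha : 0 < a) (hb : 0 < b) : 0 < betaR a b := by
  have := Real.Gamma_pos_of_pos ha
  have := Real.Gamma_pos_of_pos hb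
  have := Real.Gamma_pos_of_pos (add_pos ha hb)
  exact div_pos (by positivity) ‹0 < Real.Gamma (a+b)›

lemma integrableOn_beta {a b : ℝ} (ha : 0 < a) (hb : 0 < b) :
    IntegrableOn (fun x : ℝ => x ^ (a-1) * (1-x) ^ (b-1)) (Ioo 0 1) := by
  have hc := (Complex.betaIntegral_convergent (u := (a:ℂ)) (v := (b:ℂ)) (by simpa) (by simpa)).norm
  rw [intervalIntegrable_iff_integrableOn_Ioc_of_le zero_le_one] at hc
  refine ((hc.mono_set Ioo_subset_Ioc_self).congr_fun (fun x hx => ?_) measurableSet_Ioo)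
  obtain ⟨hx0, hx1⟩ := hx
  dsimp only
  rw [norm_mul]
  rw [show ((a:ℂ) - 1) = ((a - 1 : ℝ) : ℂ) by push_cast; ring,
      show ((b:ℂ) - 1) = ((b - 1 : ℝ) : ℂ) by push_cast; ring]
  rw [show ((1:ℂ) - (x:ℂ)) = ((1 - x : ℝ) : ℂ) by push_cast; ring]
  rw [Complex.norm_cpow_eq_rpow_re_of_pos hx0, Complex.norm_cpow_eq_rpow_re_of_pos (by linarith)]
  simp

lemma integral_beta {a b : ℝ} (ha : 0 < a) (hb : 0 < b) :
    ∫ x in Ioo (0:ℝ) 1, x ^ (a-1) * (1-x) ^ (b-1) = betaR a b := by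
  have hab : (0:ℝ) < a + b := by linarith
  have hgne : Complex.Gamma ((a:ℂ) + b) ≠ 0 := by
    rw [show ((a:ℂ) + b) = ((a + b : ℝ) : ℂ) by push_cast; ring, Complex.Gamma_ofReal]
    exact_mod_cast (Real.Gamma_pos_of_pos hab).ne'
  have hbeta : Complex.betaIntegral a b =
      ((Real.Gamma a * Real.Gamma b / Real.Gamma (a+b) : ℝ) : ℂ) := by
    have h := Complex.Gamma_mul_Gamma_eq_betaIntegral (s := (a:ℂ)) (t := (b:ℂ)) (by simpa) (by simpa)
    rw [show ((a:ℂ) + b) = ((a + b : ℝ) : ℂ) by push_cast; ring, Complex.Gamma_ofReal,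
        Complex.Gamma_ofReal, Complex.Gamma_ofReal] at h
    have hne : ((Real.Gamma (a+b) : ℝ) : ℂ) ≠ 0 := by
      exact_mod_cast (Real.Gamma_pos_of_pos hab).ne'
    push_cast
    rw [eq_div_iff hne]
    linear_combination -h
  have key : Complex.betaIntegral a b
      = ((∫ x in Ioo (0:ℝ) 1, x ^ (a-1) * (1-x) ^ (b-1) : ℝ) : ℂ) := by
    rw [Complex.betaIntegral, intervalIntegral.integral_of_le zero_le_one,
        ← MeasureTheory.integral_Ioc_eq_integral_Ioo]
    refine (setIntegral_congr_fun measurableSet_Ioc fun x hx => ?_).trans integral_ofReal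
    obtain ⟨hx0, hx1⟩ := hx
    show (x:ℂ) ^ ((a:ℂ) - 1) * ((1:ℂ) - x) ^ ((b:ℂ) - 1) = _
    rw [show ((a:ℂ) - 1) = ((a - 1 : ℝ) : ℂ) by push_cast; ring,
        show ((b:ℂ) - 1) = ((b - 1 : ℝ) : ℂ) by push_cast; ring,
        show ((1:ℂ) - (x:ℂ)) = ((1 - x : ℝ) : ℂ) by push_cast; ring,
        ← Complex.ofReal_cpow hx0.le, ← Complex.ofReal_cpow (by linarith)]
    push_cast
    ring_nf
    rfl
  rw [hbeta] at key
  rw [betaR]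
  exact_mod_cast key.symm

lemma binomial_pos {r t : ℝ} (hr : 0 < r) (ht0 : 0 ≤ t) (ht1 : t < 1) :
    Summable (fun n : ℕ => poch r n / n.factorial * t ^ n) ∧
    ∑' n : ℕ, poch r n / n.factorial * t ^ n = (1 - t) ^ (-r) := by
  have h1t : (0:ℝ) < 1 - t := by linarith
  set A : ℕ → ℝ := fun n => Real.Gamma (r + n) * (t ^ n / n.factorial) with hA
  have hApos : ∀ n : ℕ, 0 < Real.Gamma (r + n) := fun n =>
    Real.Gamma_pos_of_pos (by positivity)
  have hAnn : ∀ n, 0 ≤ A n := fun n => by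
    have h1 := (hApos n).le
    have h2 : (0:ℝ) ≤ t ^ n / n.factorial := by positivity
    exact mul_nonneg h1 h2
  -- each A n as a lintegral
  have step1 : ∀ n : ℕ, ENNReal.ofReal (A n) =
      ∫⁻ x in Ioi (0:ℝ), ENNReal.ofReal
        (Real.exp (-x) * x ^ (r + n - 1) * (t ^ n / n.factorial)) := by
    intro n
    have hpos : (0:ℝ) < r + n := by positivity
    have hin : IntegrableOn
        (fun x : ℝ => Real.exp (-x) * x ^ (r + n - 1) * (t ^ n / n.factorial)) (Ioi 0) :=
      (Real.GammaIntegral_convergent hpos).mul_const _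
    rw [← ofReal_integral_eq_lintegral_ofReal hin]
    · congr 1
      rw [MeasureTheory.integral_mul_const, ← Real.Gamma_eq_integral hpos]
    · filter_upwards [ae_restrict_mem measurableSet_Ioi] with x hx
      have hx0 : (0:ℝ) < x := hx
      have h1 : (0:ℝ) ≤ t ^ n / n.factorial := by positivity
      positivity
  -- swap
  have swap : ∑' n : ℕ, ENNReal.ofReal (A n) =
      ∫⁻ x in Ioi (0:ℝ), ∑' n : ℕ, ENNReal.ofReal
        (Real.exp (-x) * x ^ (r + n - 1) * (t ^ n / n.factorial)) := by
    simp_rw [step1]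
    rw [← lintegral_tsum]
    intro n
    apply Measurable.aemeasurable
    apply Measurable.ennreal_ofReal
    fun_prop
  -- pointwise evaluation of the inner sum
  have ptwise : ∀ x : ℝ, x ∈ Ioi (0:ℝ) →
      (∑' n : ℕ, ENNReal.ofReal (Real.exp (-x) * x ^ (r + n - 1) * (t ^ n / n.factorial)))
        = ENNReal.ofReal (x ^ (r - 1) * Real.exp (-((1 - t) * x))) := by
    intro x hx
    have hx0 : (0:ℝ) < x := hx
    have hterm : ∀ n : ℕ, Real.exp (-x) * x ^ (r + n - 1) * (t ^ n / n.factorial)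
        = Real.exp (-x) * x ^ (r - 1) * ((t * x) ^ n / n.factorial) := by
      intro n
      rw [show r + (n:ℝ) - 1 = (r - 1) + (n:ℝ) by ring, Real.rpow_add hx0,
        Real.rpow_natCast, mul_pow]
      ring
    have hsum : Summable (fun n : ℕ => Real.exp (-x) * x ^ (r - 1) * ((t * x) ^ n / n.factorial)) :=
      (Real.summable_pow_div_factorial (t * x)).mul_left _
    calc (∑' n : ℕ, ENNReal.ofReal (Real.exp (-x) * x ^ (r + n - 1) * (t ^ n / n.factorial)))
        = ∑' n : ℕ, ENNReal.ofReal (Real.exp (-x) * x ^ (r - 1) * ((t * x) ^ n / n.factorial)) := by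
          congr 1; funext n; rw [hterm n]
      _ = ENNReal.ofReal (∑' n : ℕ, Real.exp (-x) * x ^ (r - 1) * ((t * x) ^ n / n.factorial)) := by
          rw [ENNReal.ofReal_tsum_of_nonneg (fun n => by positivity) hsum]
      _ = ENNReal.ofReal (x ^ (r - 1) * Real.exp (-((1 - t) * x))) := by
          congr 1
          rw [tsum_mul_left]
          have hexp : ∑' n : ℕ, ((t * x) ^ n / n.factorial : ℝ) = Real.exp (t * x) := by
            rw [Real.exp_eq_exp_ℝ, NormedSpace.exp_eq_tsum_div]
          rw [hexp, show -((1 - t) * x) = -x + t * x by ring, Real.exp_add]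
          ring
  -- value of the limit integral
  have hival : ∫⁻ x in Ioi (0:ℝ), ENNReal.ofReal (x ^ (r - 1) * Real.exp (-((1 - t) * x)))
      = ENNReal.ofReal ((1 / (1 - t)) ^ r * Real.Gamma r) := by
    have hi1 : IntegrableOn (fun x : ℝ =>
        Real.exp (-((1 - t) * x)) * ((1 - t) * x) ^ (r - 1)) (Ioi 0) := by
      have := (integrableOn_Ioi_comp_mul_left_iff
        (fun u : ℝ => Real.exp (-u) * u ^ (r - 1)) 0 h1t).mpr
      simp only [mul_zero] at this
      exact this (Real.GammaIntegral_convergent hr)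
    have hi2 : IntegrableOn (fun x : ℝ =>
        Real.exp (-((1 - t) * x)) * ((1 - t) * x) ^ (r - 1) * (1 - t) ^ (1 - r)) (Ioi 0) :=
      hi1.mul_const _
    have hi : IntegrableOn (fun x : ℝ => x ^ (r - 1) * Real.exp (-((1 - t) * x))) (Ioi 0) := by
      refine hi2.congr_fun (fun x hx => ?_) measurableSet_Ioi
      have hx0 : (0:ℝ) < x := hx
      dsimp only
      rw [Real.mul_rpow h1t.le hx0.le]
      rw [show Real.exp (-((1 - t) * x)) * ((1 - t) ^ (r - 1) * x ^ (r - 1)) * (1 - t) ^ (1 - r)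
            = ((1 - t) ^ (r - 1) * (1 - t) ^ (1 - r)) * (x ^ (r - 1) * Real.exp (-((1 - t) * x)))
          by ring, ← Real.rpow_add h1t]
      norm_num
    rw [← ofReal_integral_eq_lintegral_ofReal hi]
    · congr 1
      exact Real.integral_rpow_mul_exp_neg_mul_Ioi hr h1t
    · filter_upwards [ae_restrict_mem measurableSet_Ioi] with x hx
      have hx0 : (0:ℝ) < x := hx
      positivity
  have main : ∑' n : ℕ, ENNReal.ofReal (A n)
      = ENNReal.ofReal ((1 / (1 - t)) ^ r * Real.Gamma r) := by
    rw [swap, ← hival]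
    exact lintegral_congr_ae ((ae_restrict_iff' measurableSet_Ioi).2 (Eventually.of_forall ptwise))
  -- summability and value of the real sum
  have hfin : ∑' n : ℕ, ENNReal.ofReal (A n) ≠ ⊤ := by rw [main]; exact ENNReal.ofReal_ne_top
  have hsumA : Summable A := by
    have := ENNReal.summable_toReal hfin
    refine this.congr fun n => ?_
    rw [ENNReal.toReal_ofReal (hAnn n)]
  have htsumA : ∑' n, A n = (1 / (1 - t)) ^ r * Real.Gamma r := by
    have h1 := ENNReal.tsum_toReal_eq (f := fun n => ENNReal.ofReal (A n))
      (fun n => ENNReal.ofReal_ne_top)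
    rw [main, ENNReal.toReal_ofReal (by positivity)] at h1
    rw [h1]
    exact tsum_congr fun n => (ENNReal.toReal_ofReal (hAnn n)).symm
  -- translate to poch
  have hGr : (0:ℝ) < Real.Gamma r := Real.Gamma_pos_of_pos hr
  have hrep : ∀ n : ℕ, poch r n / n.factorial * t ^ n = A n / Real.Gamma r := by
    intro n
    simp only [hA]
    rw [Gamma_poch (fun k => by positivity) n]
    field_simp
  constructor
  · refine (hsumA.div_const (Real.Gamma r)).congr fun n => (hrep n).symm
  · calc ∑' n : ℕ, poch r n / n.factorial * t ^ n = ∑' n, A n / Real.Gamma r :=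
          tsum_congr hrep
      _ = (∑' n, A n) / Real.Gamma r := by
          rw [tsum_div_const]
      _ = (1 / (1 - t)) ^ r := by rw [htsumA]; field_simp
      _ = (1 - t) ^ (-r) := by
          rw [one_div, Real.inv_rpow h1t.le, ← Real.rpow_neg h1t.le]
  

lemma binomial_neg {r t : ℝ} (hr1 : -1 < r) (hr0 : r < 0) (ht0 : 0 ≤ t) (ht1 : t < 1) :
    (Summable (fun n : ℕ => poch r n / n.factorial * t ^ n) ∧
      ∑' n : ℕ, poch r n / n.factorial * t ^ n = (1 - t) ^ (-r)) ∧
    (Summable (fun n : ℕ => |poch r n / n.factorial * t ^ n|) ∧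
      ∑' n : ℕ, |poch r n / n.factorial * t ^ n| ≤ 2) := by
  have h1t : (0:ℝ) < 1 - t := by linarith
  have hr1' : (0:ℝ) < r + 1 := by linarith
  obtain ⟨hcsum, hcval⟩ := binomial_pos hr1' ht0 ht1
  set c : ℕ → ℝ := fun n => poch (r+1) n / n.factorial * t ^ n with hc
  set b : ℕ → ℝ := fun n => poch r n / n.factorial * t ^ n with hb
  set e : ℕ → ℝ := fun n => if n = 0 then 0 else t * c (n-1) with he
  have hcnn : ∀ n, 0 ≤ c n := fun n => by
    have := (poch_pos hr1' n).le
    simp only [hc]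
    positivity
  have henn : ∀ n, 0 ≤ e n := fun n => by
    simp only [he]
    split
    · exact le_refl 0
    · exact mul_nonneg ht0 (hcnn _)
  have hbe : ∀ n, b n = c n - e n := by
    intro n
    match n with
    | 0 => simp [hb, hc, he, poch_zero]
    | (n+1) =>
      simp only [hb, hc, he, Nat.add_sub_cancel, if_neg (Nat.succ_ne_zero n)]
      rw [poch_succ' r n, poch_succ (r+1) n]
      rw [Nat.factorial_succ]
      field_simp
      push_cast; ring
  have hesum : Summable e := by
    rw [← summable_nat_add_iff 1]
    refine (hcsum.mul_left t).congr fun n => ?_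
    simp [he]
  have hesum_val : ∑' n, e n = t * ∑' n, c n := by
    rw [hesum.tsum_eq_zero_add]
    simp only [he, if_pos rfl, Nat.add_sub_cancel, zero_add]
    simp only [if_neg (Nat.succ_ne_zero _)]
    rw [tsum_mul_left]
  have hbsum : Summable b := by
    refine (hcsum.sub hesum).congr fun n => (hbe n).symm
  have hbval : ∑' n, b n = (1 - t) ^ (-r) := by
    calc ∑' n, b n = ∑' n, (c n - e n) := tsum_congr hbe
      _ = (∑' n, c n) - ∑' n, e n := Summable.tsum_sub hcsum hesum
      _ = (1 - t) * ∑' n, c n := by rw [hesum_val]; ring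
      _ = (1 - t) ^ (-r) := by
          rw [hcval, show (-r) = 1 + (-(r+1)) by ring, Real.rpow_add h1t, Real.rpow_one]
  -- absolute values
  have hbneg : ∀ n, b (n+1) ≤ 0 := by
    intro n
    simp only [hb]
    rw [poch_succ' r n]
    have h1 : 0 ≤ poch (r+1) n := (poch_pos hr1' n).le
    have h2 : (0:ℝ) ≤ t ^ (n+1) / (n+1).factorial := by positivity
    have : r * poch (r+1) n ≤ 0 := mul_nonpos_of_nonpos_of_nonneg hr0.le h1
    calc r * poch (r+1) n / ((n+1).factorial : ℝ) * t ^ (n+1)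
        = (r * poch (r+1) n) * (t ^ (n+1) / ((n+1).factorial : ℝ)) := by ring
      _ ≤ 0 := mul_nonpos_of_nonpos_of_nonneg this h2
  have habs : ∀ n, |b n| ≤ c n + e n := by
    intro n
    rw [hbe n, abs_sub_comm]
    calc |e n - c n| ≤ |e n| + |c n| := abs_sub _ _
      _ = e n + c n := by rw [abs_of_nonneg (henn n), abs_of_nonneg (hcnn n)]
      _ = c n + e n := by ring
  have habsum : Summable (fun n => |b n|) :=
    Summable.of_nonneg_of_le (fun n => abs_nonneg _) habs (hcsum.add hesum)
  have habsval : ∑' n, |b n| ≤ 2 := by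
    have h0 : |b 0| = 1 := by simp [hb, poch_zero]
    have hshift : ∀ n : ℕ, |b (n+1)| = e (n+1) - c (n+1) := by
      intro n
      rw [abs_of_nonpos (hbneg n), hbe (n+1)]
      ring
    have hcsum1 : Summable (fun n : ℕ => c (n+1)) := (summable_nat_add_iff 1).mpr hcsum
    have hesum1 : Summable (fun n : ℕ => e (n+1)) := (summable_nat_add_iff 1).mpr hesum
    rw [habsum.tsum_eq_zero_add, h0]
    have : ∑' n : ℕ, |b (n+1)| = (∑' n : ℕ, e (n+1)) - ∑' n : ℕ, c (n+1) := by
      rw [← Summable.tsum_sub hesum1 hcsum1]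
      exact tsum_congr hshift
    rw [this]
    have he1 : ∑' n : ℕ, e (n+1) = ∑' n, e n := by
      rw [hesum.tsum_eq_zero_add]
      simp only [he, if_pos rfl, zero_add]
    have hc1 : ∑' n : ℕ, c (n+1) = (∑' n, c n) - c 0 := by
      rw [hcsum.tsum_eq_zero_add]; ring
    rw [he1, hc1, hesum_val]
    have hc0 : c 0 = 1 := by simp [hc, poch_zero]
    have hcpos : 0 ≤ ∑' n, c n := tsum_nonneg hcnn
    nlinarith [hcpos, h1t]
  exact ⟨⟨hbsum, hbval⟩, habsum, habsval⟩


noncomputable def Xf (a b : ℝ) (x : ℝ) : ℝ := x ^ (a-1) * (1-x) ^ (b-1)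

/-- the product measure on the open unit square -/
noncomputable def ν : Measure (ℝ × ℝ) :=
  (volume.restrict (Ioo (0:ℝ) 1)).prod (volume.restrict (Ioo (0:ℝ) 1))

noncomputable def fInt (α β : ℝ) (p : ℝ × ℝ) : ℝ :=
  Xf α β p.1 * Xf β α p.2 * (1 - p.1 * p.2) ^ (1 - α - β)

noncomputable def trm (α β : ℝ) (n : ℕ) (p : ℝ × ℝ) : ℝ :=
  poch (α + β - 1) n / n.factorial * (Xf (α + n) β p.1 * Xf (β + n) α p.2)

lemma measurable_Xf (a b : ℝ) : Measurable (Xf a b) := by unfold Xf; fun_prop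

lemma measurable_trm (α β : ℝ) (n : ℕ) : Measurable (trm α β n) := by
  unfold trm Xf; fun_prop

lemma measurable_fInt (α β : ℝ) : Measurable (fInt α β) := by
  unfold fInt Xf; fun_prop

lemma ae_sq : ∀ᵐ p ∂ν, p ∈ Ioo (0:ℝ) 1 ×ˢ Ioo (0:ℝ) 1 := by
  rw [ν, Measure.prod_restrict]
  exact ae_restrict_mem (measurableSet_Ioo.prod measurableSet_Ioo)

lemma Xf_pos {a b x : ℝ} (hx : x ∈ Ioo (0:ℝ) 1) : 0 < Xf a b x := by
  obtain ⟨h0, h1⟩ := hx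
  have : (0:ℝ) < 1 - x := by linarith
  unfold Xf; positivity

lemma xy_mem {x y : ℝ} (hx : x ∈ Ioo (0:ℝ) 1) (hy : y ∈ Ioo (0:ℝ) 1) :
    0 ≤ x * y ∧ x * y < 1 := by
  obtain ⟨hx0, hx1⟩ := hx; obtain ⟨hy0, hy1⟩ := hy
  constructor
  · positivity
  · nlinarith

lemma trm_factor {α β : ℝ} (n : ℕ) {x y : ℝ} (hx : x ∈ Ioo (0:ℝ) 1) (hy : y ∈ Ioo (0:ℝ) 1) :
    trm α β n (x, y) = (poch (α + β - 1) n / n.factorial * (x * y) ^ n)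
      * (Xf α β x * Xf β α y) := by
  obtain ⟨hx0, hx1⟩ := hx; obtain ⟨hy0, hy1⟩ := hy
  unfold trm Xf
  simp only
  rw [show α + (n:ℝ) - 1 = (α - 1) + (n:ℝ) by ring, Real.rpow_add hx0,
      show β + (n:ℝ) - 1 = (β - 1) + (n:ℝ) by ring, Real.rpow_add hy0,
      Real.rpow_natCast, Real.rpow_natCast, mul_pow]
  ring

section rep

variable {α β : ℝ}

/-- pointwise summability and sum of the terms -/
lemma trm_sum (hα : 0 < α) (hβ : 0 < β) (hr1 : -1 < α + β - 1) (hr0 : α + β - 1 ≠ 0)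
    {x y : ℝ} (hx : x ∈ Ioo (0:ℝ) 1) (hy : y ∈ Ioo (0:ℝ) 1) :
    Summable (fun n => trm α β n (x, y)) ∧
    (∑' n, trm α β n (x, y)) = fInt α β (x, y) ∧
    Summable (fun n => |trm α β n (x, y)|) ∧
    (∑' n, |trm α β n (x, y)|) ≤
      (Xf α β x * Xf β α y) * max 2 ((1 - x * y) ^ (-(α + β - 1))) := by
  obtain ⟨ht0, ht1⟩ := xy_mem hx hy
  set r := α + β - 1 with hrdef
  set t := x * y with htdef
  set G := Xf α β x * Xf β α y with hG
  have hGpos : 0 < G := mul_pos (Xf_pos hx) (Xf_pos hy)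
  have hbin : (Summable (fun n : ℕ => poch r n / n.factorial * t ^ n) ∧
      ∑' n : ℕ, poch r n / n.factorial * t ^ n = (1 - t) ^ (-r)) ∧
      (Summable (fun n : ℕ => |poch r n / n.factorial * t ^ n|) ∧
      ∑' n : ℕ, |poch r n / n.factorial * t ^ n| ≤ max 2 ((1 - t) ^ (-r))) := by
    rcases lt_or_gt_of_ne hr0 with h | h
    · obtain ⟨h1, h2⟩ := binomial_neg hr1 h ht0 ht1
      exact ⟨h1, h2.1, h2.2.trans (le_max_left _ _)⟩
    · obtain ⟨h1, h2⟩ := binomial_pos h ht0 ht1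
      refine ⟨⟨h1, h2⟩, ?_, ?_⟩
      · refine h1.congr fun n => ?_
        rw [abs_of_nonneg]
        have := poch_nonneg (by linarith : (0:ℝ) ≤ r) n
        positivity
      · calc ∑' n : ℕ, |poch r n / n.factorial * t ^ n|
            = ∑' n : ℕ, poch r n / n.factorial * t ^ n := by
              refine tsum_congr fun n => ?_
              rw [abs_of_nonneg]
              have := poch_nonneg (by linarith : (0:ℝ) ≤ r) n
              positivity
          _ = (1 - t) ^ (-r) := h2
          _ ≤ max 2 ((1 - t) ^ (-r)) := le_max_right _ _
  obtain ⟨⟨hsum, hval⟩, habsum, habsle⟩ := hbin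
  have hfac : ∀ n, trm α β n (x, y) = (poch r n / n.factorial * t ^ n) * G :=
    fun n => trm_factor n hx hy
  refine ⟨?_, ?_, ?_, ?_⟩
  · exact (hsum.mul_right G).congr fun n => (hfac n).symm
  · calc (∑' n, trm α β n (x, y)) = ∑' n, (poch r n / n.factorial * t ^ n) * G :=
          tsum_congr hfac
      _ = ((1 - t) ^ (-r)) * G := by rw [tsum_mul_right, hval]
      _ = fInt α β (x, y) := by
          unfold fInt
          rw [← hG, ← htdef, show 1 - α - β = -r by rw [hrdef]; ring]
          ring
  · refine (habsum.mul_right G).congr fun n => ?_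
    rw [hfac n, abs_mul (poch r n / (n.factorial:ℝ) * t ^ n) G, abs_of_nonneg hGpos.le]
  · calc (∑' n, |trm α β n (x, y)|) = ∑' n, |poch r n / n.factorial * t ^ n| * G := by
          refine tsum_congr fun n => ?_
          rw [hfac n, abs_mul (poch r n / (n.factorial:ℝ) * t ^ n) G, abs_of_nonneg hGpos.le]
      _ = (∑' n, |poch r n / n.factorial * t ^ n|) * G := tsum_mul_right
      _ ≤ max 2 ((1 - t) ^ (-r)) * G := by
          exact mul_le_mul_of_nonneg_right habsle hGpos.le
      _ = G * max 2 ((1 - t) ^ (-r)) := by ring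

end rep

lemma lint_Xf_fin {a b : ℝ} (ha : 0 < a) (hb : 0 < b) :
    ∫⁻ x in Ioo (0:ℝ) 1, ENNReal.ofReal (Xf a b x) ≠ ⊤ := by
  have h1 : ∫⁻ x in Ioo (0:ℝ) 1, ENNReal.ofReal (Xf a b x)
      ≤ ∫⁻ x in Ioo (0:ℝ) 1, (‖Xf a b x‖₊ : ENNReal) :=
    lintegral_mono fun x => Real.ofReal_le_enorm _
  exact (h1.trans_lt (integrableOn_beta ha hb).2).ne

lemma lint_prod_fin {a1 b1 a2 b2 c : ℝ} (ha1 : 0 < a1) (hb1 : 0 < b1) (ha2 : 0 < a2)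
    (hb2 : 0 < b2) (hc : 0 ≤ c) :
    ∫⁻ p, ENNReal.ofReal (c * (Xf a1 b1 p.1 * Xf a2 b2 p.2)) ∂ν ≠ ⊤ := by
  have hcongr : ∫⁻ p, ENNReal.ofReal (c * (Xf a1 b1 p.1 * Xf a2 b2 p.2)) ∂ν
      = ∫⁻ p, ENNReal.ofReal c * (ENNReal.ofReal (Xf a1 b1 p.1)
          * ENNReal.ofReal (Xf a2 b2 p.2)) ∂ν := by
    refine lintegral_congr_ae (ae_sq.mono fun p hp => ?_)
    dsimp only
    rw [ENNReal.ofReal_mul hc, ENNReal.ofReal_mul (Xf_pos hp.1).le]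
  rw [hcongr, lintegral_const_mul' _ _ ENNReal.ofReal_ne_top]
  have hprod : ∫⁻ p, ENNReal.ofReal (Xf a1 b1 p.1) * ENNReal.ofReal (Xf a2 b2 p.2) ∂ν
      = (∫⁻ x in Ioo (0:ℝ) 1, ENNReal.ofReal (Xf a1 b1 x))
        * ∫⁻ y in Ioo (0:ℝ) 1, ENNReal.ofReal (Xf a2 b2 y) := by
    rw [ν]
    exact lintegral_prod_mul ((measurable_Xf a1 b1).ennreal_ofReal).aemeasurable
      ((measurable_Xf a2 b2).ennreal_ofReal).aemeasurable
  rw [hprod]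
  exact ENNReal.mul_ne_top ENNReal.ofReal_ne_top
    (ENNReal.mul_ne_top (lint_Xf_fin ha1 hb1) (lint_Xf_fin ha2 hb2))

section rep2
variable {α β : ℝ}

lemma bound_exists (hα : 0 < α) (hβ : 0 < β) (hr1 : -1 < α + β - 1) (hr0 : α + β - 1 ≠ 0) :
    ∃ M : ℝ × ℝ → ℝ,
      (∀ p : ℝ × ℝ, p ∈ Ioo (0:ℝ) 1 ×ˢ Ioo (0:ℝ) 1 →
        (Xf α β p.1 * Xf β α p.2) * max 2 ((1 - p.1 * p.2) ^ (-(α + β - 1))) ≤ M p) ∧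
      ∫⁻ p, ENNReal.ofReal (M p) ∂ν ≠ ⊤ := by
  set r := α + β - 1 with hrdef
  -- pick exponents for the second factor
  obtain ⟨b2, a2, hb2, ha2, hsecond⟩ : ∃ b2 a2 : ℝ, 0 < b2 ∧ 0 < a2 ∧
      ∀ p : ℝ × ℝ, p ∈ Ioo (0:ℝ) 1 ×ˢ Ioo (0:ℝ) 1 →
        (Xf α β p.1 * Xf β α p.2) * (1 - p.1 * p.2) ^ (-r)
          ≤ Xf α b2 p.1 * Xf β a2 p.2 := by
    rcases lt_or_gt_of_ne hr0 with hneg | hpos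
    · refine ⟨β, α, hβ, hα, fun p hp => ?_⟩
      obtain ⟨ht0, ht1⟩ := xy_mem hp.1 hp.2
      have h1t : 0 < 1 - p.1 * p.2 := by linarith
      have hle1 : (1 - p.1 * p.2) ^ (-r) ≤ 1 :=
        Real.rpow_le_one h1t.le (by linarith) (by linarith)
      calc (Xf α β p.1 * Xf β α p.2) * (1 - p.1 * p.2) ^ (-r)
          ≤ (Xf α β p.1 * Xf β α p.2) * 1 := by
            refine mul_le_mul_of_nonneg_left hle1 ?_
            exact (mul_pos (Xf_pos hp.1) (Xf_pos hp.2)).le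
        _ = Xf α β p.1 * Xf β α p.2 := by ring
    · -- r > 0 : use (1-xy)^(-r) ≤ (1-x)^(-θr) (1-y)^(-(1-θ)r), θ = β/s
      set s := α + β with hsdef
      have hs1 : 1 < s := by simp only [hsdef]; linarith
      have hs0 : 0 < s := by linarith
      refine ⟨β / s, α / s, by positivity, by positivity, fun p hp => ?_⟩
      obtain ⟨hx0, hx1⟩ := hp.1
      obtain ⟨hy0, hy1⟩ := hp.2
      obtain ⟨ht0, ht1⟩ := xy_mem hp.1 hp.2
      have h1t : 0 < 1 - p.1 * p.2 := by linarith
      have h1x : 0 < 1 - p.1 := by linarith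
      have h1y : 0 < 1 - p.2 := by linarith
      have hx1t : 1 - p.1 ≤ 1 - p.1 * p.2 := by nlinarith
      have hy1t : 1 - p.2 ≤ 1 - p.1 * p.2 := by nlinarith
      have hb0 : 0 ≤ β / s * r := by positivity
      have ha0 : 0 ≤ α / s * r := by positivity
      have hθ1 : (1 - p.1 * p.2) ^ (-(β / s * r)) ≤ (1 - p.1) ^ (-(β / s * r)) :=
        Real.rpow_le_rpow_of_nonpos h1x hx1t (neg_nonpos.mpr hb0)
      have hθ2 : (1 - p.1 * p.2) ^ (-(α / s * r)) ≤ (1 - p.2) ^ (-(α / s * r)) :=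
        Real.rpow_le_rpow_of_nonpos h1y hy1t (neg_nonpos.mpr ha0)
      have hsplit : (1 - p.1 * p.2) ^ (-r)
          = (1 - p.1 * p.2) ^ (-(β / s * r)) * (1 - p.1 * p.2) ^ (-(α / s * r)) := by
        rw [← Real.rpow_add h1t]
        congr 1
        field_simp
        ring
      have hXx : Xf α β p.1 * (1 - p.1) ^ (-(β / s * r)) = Xf α (β / s) p.1 := by
        unfold Xf
        rw [mul_assoc, ← Real.rpow_add h1x]
        congr 2
        have : β / s * r = β - β / s := by field_simp; ring
        rw [this]; ring
      have hXy : Xf β α p.2 * (1 - p.2) ^ (-(α / s * r)) = Xf β (α / s) p.2 := by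
        unfold Xf
        rw [mul_assoc, ← Real.rpow_add h1y]
        congr 2
        have : α / s * r = α - α / s := by field_simp; ring
        rw [this]; ring
      calc (Xf α β p.1 * Xf β α p.2) * (1 - p.1 * p.2) ^ (-r)
          = (Xf α β p.1 * (1 - p.1 * p.2) ^ (-(β / s * r)))
            * (Xf β α p.2 * (1 - p.1 * p.2) ^ (-(α / s * r))) := by rw [hsplit]; ring
        _ ≤ (Xf α β p.1 * (1 - p.1) ^ (-(β / s * r)))
            * (Xf β α p.2 * (1 - p.2) ^ (-(α / s * r))) := by
            refine mul_le_mul ?_ ?_ ?_ ?_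
            · exact mul_le_mul_of_nonneg_left hθ1 (Xf_pos hp.1).le
            · exact mul_le_mul_of_nonneg_left hθ2 (Xf_pos hp.2).le
            · have := Real.rpow_nonneg h1t.le (-(α / s * r))
              exact mul_nonneg (Xf_pos hp.2).le this
            · have := Real.rpow_nonneg h1x.le (-(β / s * r))
              exact mul_nonneg (Xf_pos hp.1).le this
        _ = Xf α (β / s) p.1 * Xf β (α / s) p.2 := by rw [hXx, hXy]
  refine ⟨fun p => 2 * (Xf α β p.1 * Xf β α p.2) + Xf α b2 p.1 * Xf β a2 p.2, ?_, ?_⟩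
  · intro p hp
    obtain ⟨ht0, ht1⟩ := xy_mem hp.1 hp.2
    have hGpos : 0 < Xf α β p.1 * Xf β α p.2 := mul_pos (Xf_pos hp.1) (Xf_pos hp.2)
    have hXnn : 0 ≤ (1 - p.1 * p.2) ^ (-r) := Real.rpow_nonneg (by linarith) _
    have hmax : max 2 ((1 - p.1 * p.2) ^ (-r)) ≤ 2 + (1 - p.1 * p.2) ^ (-r) := by
      rcases max_cases 2 ((1 - p.1 * p.2) ^ (-r)) with ⟨h, _⟩ | ⟨h, _⟩ <;> rw [h] <;> linarith
    calc (Xf α β p.1 * Xf β α p.2) * max 2 ((1 - p.1 * p.2) ^ (-r))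
        ≤ (Xf α β p.1 * Xf β α p.2) * (2 + (1 - p.1 * p.2) ^ (-r)) :=
          mul_le_mul_of_nonneg_left hmax hGpos.le
      _ = 2 * (Xf α β p.1 * Xf β α p.2)
          + (Xf α β p.1 * Xf β α p.2) * (1 - p.1 * p.2) ^ (-r) := by ring
      _ ≤ 2 * (Xf α β p.1 * Xf β α p.2) + Xf α b2 p.1 * Xf β a2 p.2 := by
          have := hsecond p hp
          linarith
  · have hle : ∫⁻ p, ENNReal.ofReal
        (2 * (Xf α β p.1 * Xf β α p.2) + Xf α b2 p.1 * Xf β a2 p.2) ∂ν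
        ≤ ∫⁻ p, (ENNReal.ofReal (2 * (Xf α β p.1 * Xf β α p.2))
            + ENNReal.ofReal (1 * (Xf α b2 p.1 * Xf β a2 p.2))) ∂ν := by
      refine lintegral_mono fun p => ?_
      rw [one_mul]
      exact ENNReal.ofReal_add_le
    have hadd : ∫⁻ p, (ENNReal.ofReal (2 * (Xf α β p.1 * Xf β α p.2))
        + ENNReal.ofReal (1 * (Xf α b2 p.1 * Xf β a2 p.2))) ∂ν
        = (∫⁻ p, ENNReal.ofReal (2 * (Xf α β p.1 * Xf β α p.2)) ∂ν)
          + ∫⁻ p, ENNReal.ofReal (1 * (Xf α b2 p.1 * Xf β a2 p.2)) ∂ν := by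
      refine lintegral_add_left ?_ _
      have : Measurable fun p : ℝ × ℝ => 2 * (Xf α β p.1 * Xf β α p.2) := by
        exact (((measurable_Xf α β).comp measurable_fst).mul
          ((measurable_Xf β α).comp measurable_snd)).const_mul 2
      exact this.ennreal_ofReal
    refine ne_top_of_le_ne_top ?_ hle
    rw [hadd]
    exact ENNReal.add_ne_top.mpr
      ⟨lint_prod_fin hα hβ hβ hα (by norm_num), lint_prod_fin hα hb2 hβ ha2 zero_le_one⟩
end rep2

section rep3
variable {α β : ℝ}

lemma trm_integrable (hα : 0 < α) (hβ : 0 < β) (n : ℕ) :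
    Integrable (trm α β n) ν := by
  have h1 : IntegrableOn (fun x : ℝ => x ^ (α + n - 1) * (1-x) ^ (β-1)) (Ioo 0 1) :=
    integrableOn_beta (by positivity) hβ
  have h2 : IntegrableOn (fun y : ℝ => y ^ (β + n - 1) * (1-y) ^ (α-1)) (Ioo 0 1) :=
    integrableOn_beta (by positivity) hα
  have hprod : Integrable (fun p : ℝ × ℝ => Xf (α + n) β p.1 * Xf (β + n) α p.2) ν := by
    rw [ν]
    exact h1.mul_prod h2
  exact (hprod.const_mul (poch (α + β - 1) n / n.factorial)).congr
    (Eventually.of_forall fun p => rfl)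

lemma trm_integral (hα : 0 < α) (hβ : 0 < β) (n : ℕ) :
    ∫ p, trm α β n p ∂ν = poch (α + β - 1) n / n.factorial
      * (betaR (α + n) β * betaR (β + n) α) := by
  unfold trm Xf
  rw [MeasureTheory.integral_const_mul]
  congr 1
  rw [ν]
  calc ∫ (a : ℝ × ℝ), a.1 ^ (α + (n:ℝ) - 1) * (1 - a.1) ^ (β - 1)
        * (a.2 ^ (β + (n:ℝ) - 1) * (1 - a.2) ^ (α - 1))
        ∂((volume.restrict (Ioo (0:ℝ) 1)).prod (volume.restrict (Ioo (0:ℝ) 1)))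
      = (∫ x in Ioo (0:ℝ) 1, x ^ (α + (n:ℝ) - 1) * (1 - x) ^ (β - 1))
        * ∫ y in Ioo (0:ℝ) 1, y ^ (β + (n:ℝ) - 1) * (1 - y) ^ (α - 1) :=
        integral_prod_mul (f := fun x : ℝ => x ^ (α + (n:ℝ) - 1) * (1 - x) ^ (β - 1))
          (g := fun y : ℝ => y ^ (β + (n:ℝ) - 1) * (1 - y) ^ (α - 1))
    _ = betaR (α + n) β * betaR (β + n) α := by
        rw [integral_beta (by positivity : (0:ℝ) < α + n) hβ,
            integral_beta (by positivity : (0:ℝ) < β + n) hα]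

lemma trm_norm_sum_fin (hα : 0 < α) (hβ : 0 < β) (hr1 : -1 < α + β - 1)
    (hr0 : α + β - 1 ≠ 0) :
    ∑' n : ℕ, ∫⁻ p, (‖trm α β n p‖₊ : ENNReal) ∂ν ≠ ⊤ := by
  obtain ⟨M, hM, hMfin⟩ := bound_exists hα hβ hr1 hr0
  rw [← lintegral_tsum (fun n => ((measurable_trm α β n).nnnorm.coe_nnreal_ennreal).aemeasurable)]
  refine ne_top_of_le_ne_top hMfin (lintegral_mono_ae (ae_sq.mono fun p hp => ?_))
  obtain ⟨hsum, hval, habsum, hable⟩ := trm_sum hα hβ hr1 hr0 hp.1 hp.2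
  have hp1 : (p.1, p.2) = p := rfl
  rw [hp1] at hsum hval habsum hable
  calc ∑' n : ℕ, (‖trm α β n p‖₊ : ENNReal)
      = ∑' n : ℕ, ENNReal.ofReal |trm α β n p| := by
        refine tsum_congr fun n => ?_
        exact Real.enorm_eq_ofReal_abs _
    _ = ENNReal.ofReal (∑' n, |trm α β n p|) :=
        (ENNReal.ofReal_tsum_of_nonneg (fun n => abs_nonneg _) habsum).symm
    _ ≤ ENNReal.ofReal (M p) := by
        refine ENNReal.ofReal_le_ofReal (hable.trans (hM p hp))

theorem Ftilde_rep (hα : 0 < α) (hβ : 0 < β) (hr1 : -1 < α + β - 1)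
    (hr0 : α + β - 1 ≠ 0) :
    Integrable (fInt α β) ν ∧ Ftilde α β = ∫ p, fInt α β p ∂ν := by
  have hmeas := fun n => (measurable_trm α β n).aestronglyMeasurable (μ := ν)
  have hfin := trm_norm_sum_fin hα hβ hr1 hr0
  have hswap := MeasureTheory.integral_tsum hmeas hfin
  obtain ⟨M, hM, hMfin⟩ := bound_exists hα hβ hr1 hr0
  -- integrability of fInt
  have hint : Integrable (fInt α β) ν := by
    refine ⟨(measurable_fInt α β).aestronglyMeasurable, ?_⟩
    rw [MeasureTheory.hasFiniteIntegral_iff_norm]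
    refine (lt_of_le_of_lt ?_ hMfin.lt_top)
    refine lintegral_mono_ae (ae_sq.mono fun p hp => ?_)
    obtain ⟨hsum, hval, habsum, hable⟩ := trm_sum hα hβ hr1 hr0 hp.1 hp.2
    have hp1 : (p.1, p.2) = p := rfl
    rw [hp1] at hsum hval habsum hable
    have h1 : |fInt α β p| ≤ ∑' n, |trm α β n p| := by
      rw [← hval]
      exact (norm_tsum_le_tsum_norm (habsum.congr fun n => (Real.norm_eq_abs _).symm)).trans
        (le_of_eq (tsum_congr fun n => Real.norm_eq_abs _))
    rw [Real.norm_eq_abs]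
    exact ENNReal.ofReal_le_ofReal (h1.trans (hable.trans (hM p hp)))
  refine ⟨hint, ?_⟩
  -- the series identity
  have hterm_eq : ∀ n : ℕ,
      (Real.Gamma α * Real.Gamma β / Real.Gamma (α + β)) ^ 2 *
        (poch α n * poch β n * poch (α + β - 1) n /
          (poch (α + β) n * poch (α + β) n * n.factorial) * 1 ^ n)
      = poch (α + β - 1) n / n.factorial * (betaR (α + n) β * betaR (β + n) α) := by
    intro n
    have hΓα := Real.Gamma_pos_of_pos hα
    have hΓβ := Real.Gamma_pos_of_pos hβ
    have hΓs := Real.Gamma_pos_of_pos (by linarith : (0:ℝ) < α + β)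
    have hps := poch_pos (by linarith : (0:ℝ) < α + β) n
    have hfac : (0:ℝ) < n.factorial := by positivity
    rw [one_pow, betaR, betaR]
    rw [show α + (n:ℝ) + β = (α + β) + n by ring, show β + (n:ℝ) + α = (α + β) + n by ring]
    rw [Gamma_poch (fun k => by positivity) n, Gamma_poch (fun k => by positivity) n,
        Gamma_poch (fun k => by push_cast; positivity) n]
    field_simp
  calc Ftilde α β
      = ∑' n : ℕ, (Real.Gamma α * Real.Gamma β / Real.Gamma (α + β)) ^ 2 *
          (poch α n * poch β n * poch (α + β - 1) n /
            (poch (α + β) n * poch (α + β) n * n.factorial) * 1 ^ n) := by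
        rw [Ftilde, F32, tsum_mul_left]
    _ = ∑' n : ℕ, ∫ p, trm α β n p ∂ν := by
        refine tsum_congr fun n => ?_
        rw [hterm_eq n, ← trm_integral hα hβ n]
    _ = ∫ p, (∑' n, trm α β n p) ∂ν := hswap.symm
    _ = ∫ p, fInt α β p ∂ν := by
        refine integral_congr_ae (ae_sq.mono fun p hp => ?_)
        obtain ⟨hsum, hval, habsum, hable⟩ := trm_sum hα hβ hr1 hr0 hp.1 hp.2
        exact hval

end rep3

section final
variable {β : ℝ}

lemma fInt_eq (α β : ℝ) {p : ℝ × ℝ} (hp : p ∈ Ioo (0:ℝ) 1 ×ˢ Ioo (0:ℝ) 1) :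
    fInt α β p = (p.1 * (1 - p.2) / (1 - p.1 * p.2)) ^ (α - 1)
      * ((1 - p.1) ^ (β - 1) * p.2 ^ (β - 1) * (1 - p.1 * p.2) ^ (-β)) := by
  obtain ⟨hx0, hx1⟩ := hp.1
  obtain ⟨hy0, hy1⟩ := hp.2
  obtain ⟨ht0, ht1⟩ := xy_mem hp.1 hp.2
  have h1t : 0 < 1 - p.1 * p.2 := by linarith
  have h1x : 0 < 1 - p.1 := by linarith
  have h1y : 0 < 1 - p.2 := by linarith
  have hu : (p.1 * (1 - p.2) / (1 - p.1 * p.2)) ^ (α - 1)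
      = p.1 ^ (α - 1) * (1 - p.2) ^ (α - 1) * ((1 - p.1 * p.2) ^ (α - 1))⁻¹ := by
    rw [Real.div_rpow (by positivity) h1t.le, Real.mul_rpow hx0.le h1y.le, div_eq_mul_inv]
  rw [hu]
  unfold fInt Xf
  rw [show ((1 - p.1 * p.2) ^ (α - 1))⁻¹ = (1 - p.1 * p.2) ^ (-(α-1)) by
        rw [Real.rpow_neg h1t.le]]
  rw [show (1:ℝ) - α - β = (-(α-1)) + (-β) by ring, Real.rpow_add h1t]
  ring

lemma fInt_lt {α1 α2 β : ℝ} (h12 : α1 < α2) {p : ℝ × ℝ}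
    (hp : p ∈ Ioo (0:ℝ) 1 ×ˢ Ioo (0:ℝ) 1) : fInt α2 β p < fInt α1 β p := by
  obtain ⟨hx0, hx1⟩ := hp.1
  obtain ⟨hy0, hy1⟩ := hp.2
  obtain ⟨ht0, ht1⟩ := xy_mem hp.1 hp.2
  have h1t : 0 < 1 - p.1 * p.2 := by linarith
  have h1x : 0 < 1 - p.1 := by linarith
  have h1y : 0 < 1 - p.2 := by linarith
  rw [fInt_eq α1 β hp, fInt_eq α2 β hp]
  have hu0 : 0 < p.1 * (1 - p.2) / (1 - p.1 * p.2) := by positivity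
  have hu1 : p.1 * (1 - p.2) / (1 - p.1 * p.2) < 1 := by
    rw [div_lt_one h1t]; nlinarith
  have hK : 0 < (1 - p.1) ^ (β - 1) * p.2 ^ (β - 1) * (1 - p.1 * p.2) ^ (-β) := by
    positivity
  exact mul_lt_mul_of_pos_right
    (Real.rpow_lt_rpow_of_exponent_gt hu0 hu1 (by linarith)) hK

lemma Ftilde_strict (hβ : 0 < β) {α1 α2 : ℝ} (hα1 : 0 < α1) (h12 : α1 < α2)
    (h1a : -1 < α1 + β - 1) (h1b : α1 + β - 1 ≠ 0) (h2b : α2 + β - 1 ≠ 0) :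
    Ftilde α2 β < Ftilde α1 β := by
  obtain ⟨hint1, hrep1⟩ := Ftilde_rep hα1 hβ h1a h1b
  obtain ⟨hint2, hrep2⟩ := Ftilde_rep (hα1.trans h12) hβ (by linarith) h2b
  rw [hrep1, hrep2]
  have hstrict : ∀ᵐ p ∂ν, 0 < fInt α1 β p - fInt α2 β p :=
    ae_sq.mono fun p hp => sub_pos.2 (fInt_lt h12 hp)
  have hpos : 0 < ∫ p, (fInt α1 β p - fInt α2 β p) ∂ν := by
    rw [MeasureTheory.integral_pos_iff_support_of_nonneg_ae
      (hstrict.mono fun p hp => hp.le) (hint1.sub hint2)]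
    have huniv : ν univ = 1 := by
      rw [ν, ← Set.univ_prod_univ, Measure.prod_prod]
      simp [Real.volume_Ioo]
    have hcompl : ν {p | ¬ (0 < fInt α1 β p - fInt α2 β p)} = 0 := by
      rw [← MeasureTheory.ae_iff]
      exact hstrict
    have h1 : (1:ENNReal) ≤ ν {p | 0 < fInt α1 β p - fInt α2 β p} := by
      have hcover : (univ : Set (ℝ × ℝ)) ⊆
          {p | 0 < fInt α1 β p - fInt α2 β p} ∪ {p | ¬ (0 < fInt α1 β p - fInt α2 β p)} := by
        intro p _
        by_cases h : 0 < fInt α1 β p - fInt α2 β p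
        · exact Or.inl h
        · exact Or.inr h
      calc (1:ENNReal) = ν univ := huniv.symm
        _ ≤ ν ({p | 0 < fInt α1 β p - fInt α2 β p}
              ∪ {p | ¬ (0 < fInt α1 β p - fInt α2 β p)}) := measure_mono hcover
        _ ≤ ν {p | 0 < fInt α1 β p - fInt α2 β p}
              + ν {p | ¬ (0 < fInt α1 β p - fInt α2 β p)} := measure_union_le _ _
        _ = ν {p | 0 < fInt α1 β p - fInt α2 β p} := by rw [hcompl, add_zero]
    have hsub : {p : ℝ × ℝ | 0 < fInt α1 β p - fInt α2 β p}
        ⊆ Function.support fun p => fInt α1 β p - fInt α2 β p := fun p hp => ne_of_gt hp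
    calc (0:ENNReal) < 1 := by norm_num
      _ ≤ ν {p | 0 < fInt α1 β p - fInt α2 β p} := h1
      _ ≤ ν (Function.support fun p => fInt α1 β p - fInt α2 β p) := measure_mono hsub
  rw [MeasureTheory.integral_sub hint1 hint2] at hpos
  linarith

end final

theorem stmt19 :
    (∀ β : ℝ, 0 < β →
      StrictAntiOn (fun α => Ftilde α β) {α : ℝ | 0 < α ∧ 1 < α + β}) ∧
    Ftilde (1/4) (1/2) - Ftilde (3/4) (1/2) > 0 := by
  constructor
  · intro β hβ a ha b hb hab
    simp only [mem_setOf_eq] at ha hb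
    exact Ftilde_strict hβ ha.1 hab (by linarith [ha.2]) (by linarith [ha.2])
      (by linarith [hb.2])
  · have := Ftilde_strict (β := 1/2) (by norm_num) (α1 := 1/4) (α2 := 3/4)
      (by norm_num) (by norm_num) (by norm_num) (by norm_num) (by norm_num)
    linarith
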